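/- With K(x,y) = 1 - tx - txy^2/((x-y)(y-1)), the decoupling identity x(y-1)/(1-tx) = A(x) + B(y) + K(x,y)·(x-y)(1-txy)/(xy t^2 (1-tx)) holds, where A(x) = (2+x)/t + 1/(t^2 x) + 1/(t(tx-1)) and B(y) = -y/t + 1/(t(y-1)) - 1/(t^2 y). -/

import Mathlib

/- Generic decoupling identity in an arbitrary field. -/
set_option maxHeartbeats 1000000 in
lemma gen_decoupling {K : Type*} [Field K] (t x y : K)
    (ht : t ≠ 0) (hx : x ≠ 0) (hy : y ≠ 0) (hy1 : y - 1 ≠ 0) (hxy : x - y ≠ 0)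
    (htx : 1 - t * x ≠ 0) (htx2 : t * x - 1 ≠ 0) :
    x * (y - 1) / (1 - t * x) =
      ((2 + x) / t + 1 / (t ^ 2 * x) + 1 / (t * (t * x - 1))) +
      (-y / t + 1 / (t * (y - 1)) - 1 / (t ^ 2 * y)) +
      (1 - t * x - t * x * y ^ 2 / ((x - y) * (y - 1))) *
        ((x - y) * (1 - t * x * y) / (x * y * t ^ 2 * (1 - t * x))) := by
  have key : ∀ u v w w2 : K, u ≠ 0 → v ≠ 0 → w ≠ 0 → w2 ≠ 0 →
      u = x - y → v = y - 1 → w = 1 - t * x → w2 = t * x - 1 →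
      x * v / w =
        ((2 + x) / t + 1 / (t ^ 2 * x) + 1 / (t * w2)) +
        (-y / t + 1 / (t * v) - 1 / (t ^ 2 * y)) +
        (w - t * x * y ^ 2 / (u * v)) * (u * (1 - t * x * y) / (x * y * t ^ 2 * w)) := by
    intro u v w w2 hu0 hv0 hw0 hw20 hu hv hw hw2
    field_simp [ht, hx, hy, hu0, hv0, hw0, hw20]
    subst hu hv hw hw2
    ring
  have := key (x - y) (y - 1) (1 - t * x) (t * x - 1) hxy hy1 htx htx2 rfl rfl rfl rfl
  convert this using 2


/-- The field `ℚ(t, x, y)` of rational functions in three variables. -/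
noncomputable abbrev RF : Type := RatFunc (RatFunc (RatFunc ℚ))

/-- The variable `t`. -/
noncomputable def tF : RF := RatFunc.C (RatFunc.C RatFunc.X)
/-- The variable `x`. -/
noncomputable def xF : RF := RatFunc.C RatFunc.X
/-- The variable `y`. -/
noncomputable def yF : RF := RatFunc.X

/-- The kernel `K(x,y)`. -/
noncomputable def KerXY : RF :=
  1 - tF * xF - tF * xF * yF ^ 2 / ((xF - yF) * (yF - 1))

/-- The series `A(x)`. -/
noncomputable def Adec : RF :=
  (2 + xF) / tF + 1 / (tF ^ 2 * xF) + 1 / (tF * (tF * xF - 1))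

/-- The series `B(y)`. -/
noncomputable def Bdec : RF :=
  -yF / tF + 1 / (tF * (yF - 1)) - 1 / (tF ^ 2 * yF)

lemma my_one_sub_C_mul_X_ne {K : Type*} [Field K] (a : K) :
    1 - RatFunc.C a * RatFunc.X ≠ 0 := by
  have : (1 - RatFunc.C a * RatFunc.X : RatFunc K)
      = algebraMap (Polynomial K) (RatFunc K) (1 - Polynomial.C a * Polynomial.X) := by
    simp [RatFunc.algebraMap_C, RatFunc.algebraMap_X, map_sub, map_mul]
  rw [this]
  apply RatFunc.algebraMap_ne_zero
  intro h
  have := congrArg (fun q => q.coeff 0) h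
  simp at this

lemma my_X_sub_C_ne {K : Type*} [Field K] (a : K) :
    (RatFunc.X : RatFunc K) - RatFunc.C a ≠ 0 := by
  have : (RatFunc.X - RatFunc.C a : RatFunc K)
      = algebraMap (Polynomial K) (RatFunc K) (Polynomial.X - Polynomial.C a) := by
    simp [RatFunc.algebraMap_C, RatFunc.algebraMap_X, map_sub]
  rw [this]
  exact RatFunc.algebraMap_ne_zero (Polynomial.X_sub_C_ne_zero a)

theorem stmt17 :
    xF * (yF - 1) / (1 - tF * xF) =
      Adec + Bdec +
        KerXY * ((xF - yF) * (1 - tF * xF * yF) / (xF * yF * tF ^ 2 * (1 - tF * xF))) := by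
  have hX : (RatFunc.X : RatFunc ℚ) ≠ 0 := RatFunc.X_ne_zero
  have ht : tF ≠ 0 := by
    simpa [tF, map_ne_zero] using hX
  have hx : xF ≠ 0 := by
    simpa [xF, map_ne_zero] using (RatFunc.X_ne_zero : (RatFunc.X : RatFunc (RatFunc ℚ)) ≠ 0)
  have hy : yF ≠ 0 := RatFunc.X_ne_zero
  have hy1 : yF - 1 ≠ 0 := by
    simpa [yF] using my_X_sub_C_ne (1 : RatFunc (RatFunc ℚ))
  have hne : (RatFunc.X : RF) ≠ RatFunc.C (RatFunc.X : RatFunc (RatFunc ℚ)) :=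
    sub_ne_zero.mp (my_X_sub_C_ne _)
  have hxy : xF - yF ≠ 0 := by
    rw [xF, yF, sub_ne_zero]
    exact fun h => hne h.symm
  have h1 : tF * xF = RatFunc.C ((RatFunc.C RatFunc.X : RatFunc (RatFunc ℚ)) * RatFunc.X) := by
    rw [tF, xF, map_mul]
  have htx : 1 - tF * xF ≠ 0 := by
    rw [h1, show (1 : RF) = RatFunc.C 1 by simp, ← map_sub, map_ne_zero]
    exact my_one_sub_C_mul_X_ne _
  have htx2 : tF * xF - 1 ≠ 0 := by
    intro h
    have := neg_eq_zero.mpr h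
    rw [neg_sub] at this
    exact htx this
  have htxy : 1 - tF * xF * yF ≠ 0 := by
    rw [h1]
    exact my_one_sub_C_mul_X_ne _
  unfold KerXY Adec Bdec
  exact gen_decoupling tF xF yF ht hx hy hy1 hxy htx htx2
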